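/- The function h(t) = (2/3)·[(π − 2t)·cos t + 2·sin t]·sin t satisfies h''(t) = −(8/3)·(π − 2t)·sin t·cos t, and h is concave on the interval [0, π]. -/

import Mathlib

open Real

lemma h_deriv1 (t : ℝ) :
    HasDerivAt (fun t => (2/3) * ((π - 2*t) * Real.cos t + 2 * Real.sin t) * Real.sin t)
      ((2/3) * ((π - 2*t) * (Real.cos t ^ 2 - Real.sin t ^ 2) + 2 * Real.sin t * Real.cos t)) t := by
  have h1 : HasDerivAt (fun t : ℝ => (π - 2*t) * Real.cos t + 2 * Real.sin t)
      ((-2) * Real.cos t + (π - 2*t) * (-Real.sin t) + 2 * Real.cos t) t := by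
    have := (((hasDerivAt_const t π).sub ((hasDerivAt_id t).const_mul 2)).mul (Real.hasDerivAt_cos t)).add
      ((Real.hasDerivAt_sin t).const_mul 2)
    exact this.congr_deriv (by simp only [id, Pi.sub_apply]; ring)
  have h2 := ((h1.const_mul (2/3 : ℝ)).mul (Real.hasDerivAt_sin t))
  exact h2.congr_deriv (by ring)

lemma h_deriv2 (t : ℝ) :
    HasDerivAt (fun t => (2/3) * ((π - 2*t) * (Real.cos t ^ 2 - Real.sin t ^ 2) + 2 * Real.sin t * Real.cos t))
      (-(8/3) * (π - 2*t) * Real.sin t * Real.cos t) t := by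
  have hc := Real.hasDerivAt_cos t
  have hs := Real.hasDerivAt_sin t
  have h1 : HasDerivAt (fun t : ℝ => (π - 2*t) * (Real.cos t ^ 2 - Real.sin t ^ 2))
      ((-2) * (Real.cos t ^ 2 - Real.sin t ^ 2) +
        (π - 2*t) * (2 * Real.cos t * (-Real.sin t) - 2 * Real.sin t * Real.cos t)) t := by
    have := ((hasDerivAt_const t π).sub ((hasDerivAt_id t).const_mul 2)).mul
      ((hc.pow 2).sub (hs.pow 2))
    exact this.congr_deriv (by simp only [id, Pi.sub_apply, Pi.pow_apply]; ring)
  have h2 : HasDerivAt (fun t : ℝ => 2 * Real.sin t * Real.cos t)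
      (2 * Real.cos t * Real.cos t + 2 * Real.sin t * (-Real.sin t)) t := by
    exact ((hs.const_mul 2).mul hc)
  have h3 := (h1.add h2).const_mul (2/3 : ℝ)
  exact h3.congr_deriv (by ring)

/-- The density `h(t) = (2/3)[(π − 2t) cos t + 2 sin t] sin t` satisfies
`h''(t) = −(8/3)(π − 2t) sin t cos t`, and `h` is concave on `[0, π]`. -/
theorem h_second_deriv_and_concave :
    let h : ℝ → ℝ := fun t => (2/3) * ((π - 2*t) * Real.cos t + 2 * Real.sin t) * Real.sin t
    (∀ t : ℝ, deriv (deriv h) t = -(8/3) * (π - 2*t) * Real.sin t * Real.cos t) ∧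
    ConcaveOn ℝ (Set.Icc 0 π) h := by
  intro h
  have hd1 : deriv h = fun t =>
      (2/3) * ((π - 2*t) * (Real.cos t ^ 2 - Real.sin t ^ 2) + 2 * Real.sin t * Real.cos t) := by
    funext t; exact (h_deriv1 t).deriv
  have hd2 : ∀ t : ℝ, deriv (deriv h) t = -(8/3) * (π - 2*t) * Real.sin t * Real.cos t := by
    intro t; rw [hd1]; exact (h_deriv2 t).deriv
  refine ⟨hd2, ?_⟩
  apply concaveOn_of_deriv2_nonpos (convex_Icc 0 π)
  · exact (Continuous.continuousOn (by continuity))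
  · intro t ht
    exact (h_deriv1 t).differentiableAt.differentiableWithinAt
  · intro t ht
    rw [hd1]
    exact (h_deriv2 t).differentiableAt.differentiableWithinAt
  · intro t ht
    rw [interior_Icc] at ht
    obtain ⟨ht1, ht2⟩ := ht
    show deriv (deriv h) t ≤ 0
    rw [hd2]
    have hs : 0 < Real.sin t := Real.sin_pos_of_pos_of_lt_pi ht1 ht2
    rcases le_or_gt t (π/2) with hle | hlt
    · have hc : 0 ≤ Real.cos t := Real.cos_nonneg_of_mem_Icc ⟨by linarith, hle⟩
      have hp : 0 ≤ π - 2*t := by linarith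
      nlinarith [mul_nonneg (mul_nonneg hp hs.le) hc]
    · have hc : Real.cos t ≤ 0 := Real.cos_nonpos_of_pi_div_two_le_of_le hlt.le (by linarith)
      have hp : π - 2*t ≤ 0 := by linarith
      nlinarith [mul_nonneg (mul_nonneg (neg_nonneg.2 hp) hs.le) (neg_nonneg.2 hc)]
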